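/- Let (λ_n)_{n∈ℤ} be a sequence of negative reals with λ_{n-1} = λ_n(5 - λ_n) and λ_n → -∞ as n → -∞. With c_n = 1 - λ_n/4 and s_n = (-λ_n/4)·Π_{k=0}^∞ (1 + 4/(2 - λ_{n-k})), one has lim_{n→-∞} (c_n² - s_n²) = 1/2. -/

import Mathlib

open Real Filter

private noncomputable def Gf (v : ℝ) : ℝ :=
  (8 - 120*v + 688*v^2 - 1920*v^3 + 2688*v^4 - 1664*v^5 + 256*v^6) /
    (16 * ((2*v - 1) * (2*v^2 - 5*v + 1))^2)

private noncomputable def Hf (v : ℝ) : ℝ :=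
  (v^2 * (20 + 100*v^4) * ((6*v - 1) * (6*v^2 - 5*v + 1))^2) /
    (16 * ((2*v - 1) * (2*v^2 - 5*v + 1))^2)

private lemma exp_le_one_add_two_mul {t : ℝ} (h0 : 0 ≤ t) (h : t ≤ 1/2) :
    Real.exp t ≤ 1 + 2 * t := by
  have h1 : 1 - t ≤ Real.exp (-t) := by
    have := Real.add_one_le_exp (-t); linarith
  have h2 : (0:ℝ) < 1 - t := by linarith
  have hmul : Real.exp t * (1 - t) ≤ 1 := by
    calc Real.exp t * (1 - t) ≤ Real.exp t * Real.exp (-t) :=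
          mul_le_mul_of_nonneg_left h1 (Real.exp_nonneg t)
    _ = 1 := by rw [← Real.exp_add]; simp
  nlinarith [Real.exp_pos t]

section aux

variable (L : ℤ → ℝ)

private lemma grow (hLneg : ∀ n, L n < 0) (hLrec : ∀ n, L (n - 1) = L n * (5 - L n)) (n : ℤ) (k : ℕ) :
    5 ^ k * (-L n) ≤ -L (n - k) := by
  induction k with
  | zero => simp
  | succ k ih =>
    have h1 : L (n - (k+1 : ℕ)) = L (n - k) * (5 - L (n - k)) := by
      have h := hLrec (n - k)
      rw [← h]; congr 1; push_cast; ring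
    have h2 : L (n - k) < 0 := hLneg _
    have h3 : (0:ℝ) < 5 ^ k := by positivity
    have h4 : 0 < -L n := neg_pos.2 (hLneg n)
    rw [h1]
    have : (5:ℝ) ^ (k+1) * (-L n) = 5 * (5 ^ k * (-L n)) := by ring
    rw [this]
    nlinarith [ih, sq_nonneg (L (n - k))]

private lemma summable_a (hLneg : ∀ n, L n < 0) (hLrec : ∀ n, L (n - 1) = L n * (5 - L n)) (n : ℤ) :
    Summable (fun k : ℕ => 4 / (2 - L (n - k))) := by
  have hn : 0 < -L n := neg_pos.2 (hLneg n)
  refine Summable.of_nonneg_of_le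
    (fun k => le_of_lt (div_pos four_pos (by linarith [hLneg (n - k)])))
    (fun k => ?_)
    (((summable_geometric_of_lt_one (by norm_num) (by norm_num)).mul_left
      (4 / (-L n))) : Summable (fun k : ℕ => 4 / (-L n) * (1/5 : ℝ) ^ k))
  have hg := grow L hLneg hLrec n k
  have h3 : (0:ℝ) < 5 ^ k * (-L n) := by positivity
  have h5 : (0:ℝ) < 2 - L (n - k) := by linarith [hLneg (n - k)]
  have h6 : 5 ^ k * (-L n) ≤ 2 - L (n - k) := by linarith
  calc 4 / (2 - L (n - k)) ≤ 4 / (5 ^ k * (-L n)) := by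
        apply div_le_div_of_nonneg_left (by norm_num) h3 h6
  _ = 4 / (-L n) * (1/5 : ℝ) ^ k := by
        rw [div_pow, one_pow]
        field_simp

private lemma tsum_a_le (hLneg : ∀ n, L n < 0) (hLrec : ∀ n, L (n - 1) = L n * (5 - L n)) (n : ℤ) :
    (∑' k : ℕ, 4 / (2 - L (n - k))) ≤ 5 / (-L n) := by
  have hn : 0 < -L n := neg_pos.2 (hLneg n)
  have hb : ∀ k : ℕ, 4 / (2 - L (n - k)) ≤ 4 / (-L n) * (1/5 : ℝ) ^ k := by
    intro k
    have hg := grow L hLneg hLrec n k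
    have h3 : (0:ℝ) < 5 ^ k * (-L n) := by positivity
    have h6 : 5 ^ k * (-L n) ≤ 2 - L (n - k) := by linarith [hLneg (n - k)]
    calc 4 / (2 - L (n - k)) ≤ 4 / (5 ^ k * (-L n)) :=
          div_le_div_of_nonneg_left (by norm_num) h3 h6
    _ = 4 / (-L n) * (1/5 : ℝ) ^ k := by
          rw [div_pow, one_pow]; field_simp
  have := Summable.tsum_le_tsum hb (summable_a L hLneg hLrec n)
    ((summable_geometric_of_lt_one (by norm_num) (by norm_num)).mul_left _)
  calc (∑' k : ℕ, 4 / (2 - L (n - k)))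
      ≤ ∑' k : ℕ, 4 / (-L n) * (1/5 : ℝ) ^ k := this
  _ = 4 / (-L n) * (1 - 1/5 : ℝ)⁻¹ := by
        rw [tsum_mul_left, tsum_geometric_of_lt_one (by norm_num) (by norm_num)]
  _ = 5 / (-L n) := by
        rw [div_mul_eq_mul_div]; norm_num
  
private lemma summable_log (hLneg : ∀ n, L n < 0) (hLrec : ∀ n, L (n - 1) = L n * (5 - L n)) (n : ℤ) :
    Summable (fun k : ℕ => Real.log (1 + 4 / (2 - L (n - k)))) := by
  refine Summable.of_nonneg_of_le
    (fun k => ?_) (fun k => ?_) (summable_a L hLneg hLrec n)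
  · have h5 : (0:ℝ) < 2 - L (n - k) := by linarith [hLneg (n - k)]
    have h7 : (0:ℝ) ≤ 4 / (2 - L (n - k)) := by positivity
    exact Real.log_nonneg (by linarith)
  · have h5 : (0:ℝ) < 2 - L (n - k) := by linarith [hLneg (n - k)]
    have h6 : (0:ℝ) < 1 + 4 / (2 - L (n - k)) := by positivity
    have := Real.log_le_sub_one_of_pos h6
    linarith

end aux


private noncomputable def Sl (L : ℤ → ℝ) (m : ℤ) : ℝ :=
  ∑' k : ℕ, Real.log (1 + 4 / (2 - L (m - k)))

private lemma Sl_nonneg (L : ℤ → ℝ) (hLneg : ∀ n, L n < 0) (m : ℤ) : 0 ≤ Sl L m := by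
  refine tsum_nonneg fun k => ?_
  have h5 : (0:ℝ) < 2 - L (m - k) := by linarith [hLneg (m - k)]
  have h7 : (0:ℝ) ≤ 4 / (2 - L (m - k)) := by positivity
  exact Real.log_nonneg (by linarith)

private lemma Sl_le (L : ℤ → ℝ) (hLneg : ∀ n, L n < 0)
    (hLrec : ∀ n, L (n - 1) = L n * (5 - L n)) (m : ℤ) :
    Sl L m ≤ 5 / (-L m) := by
  refine le_trans (Summable.tsum_le_tsum (fun k => ?_) (summable_log L hLneg hLrec m)
    (summable_a L hLneg hLrec m)) (tsum_a_le L hLneg hLrec m)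
  have h5 : (0:ℝ) < 2 - L (m - k) := by linarith [hLneg (m - k)]
  have h6 : (0:ℝ) < 1 + 4 / (2 - L (m - k)) := by positivity
  have := Real.log_le_sub_one_of_pos h6
  linarith

private lemma prod_eq_exp (L : ℤ → ℝ) (hLneg : ∀ n, L n < 0)
    (hLrec : ∀ n, L (n - 1) = L n * (5 - L n)) (n : ℤ) :
    (∏' k : ℕ, (1 + 4 / (2 - L (n - k)))) = Real.exp (Sl L n) := by
  have h := Real.rexp_tsum_eq_tprod (f := fun k : ℕ => 1 + 4 / (2 - L (n - k)))
    (fun k => by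
      have h5 : (0:ℝ) < 2 - L (n - k) := by linarith [hLneg (n - k)]
      positivity)
    (summable_log L hLneg hLrec n)
  exact h.symm

private lemma Sl_split (L : ℤ → ℝ) (hLneg : ∀ n, L n < 0)
    (hLrec : ∀ n, L (n - 1) = L n * (5 - L n)) (m : ℤ) :
    Sl L m = Real.log (1 + 4 / (2 - L m)) + Sl L (m - 1) := by
  have h := Summable.tsum_eq_zero_add (summable_log L hLneg hLrec m)
  rw [Sl, h]
  congr 1
  · norm_num
  · rw [Sl]
    refine tsum_congr fun k => ?_
    rw [show m - ((k + 1 : ℕ) : ℤ) = m - 1 - (k : ℤ) by push_cast; ring]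

set_option maxHeartbeats 1000000 in
private lemma key (L : ℤ → ℝ) (hLneg : ∀ n, L n < 0)
    (hLrec : ∀ n, L (n - 1) = L n * (5 - L n)) (n : ℤ) (hn : L n ≤ -2) :
    Gf (L n)⁻¹ - Hf (L n)⁻¹ ≤
      (1 - L n / 4) ^ 2 -
        ((-(L n) / 4) * ∏' k : ℕ, (1 + 4 / (2 - L (n - k)))) ^ 2 ∧
    (1 - L n / 4) ^ 2 -
        ((-(L n) / 4) * ∏' k : ℕ, (1 + 4 / (2 - L (n - k)))) ^ 2 ≤ Gf (L n)⁻¹ := by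
  have hx : L n < 0 := hLneg n
  have hy : L (n - 1) < 0 := hLneg _
  have hz : L (n - 2) < 0 := hLneg _
  have hL1 : L (n - 1) = L n * (5 - L n) := hLrec n
  have hL2 : L (n - 2) = L (n - 1) * (5 - L (n - 1)) := by
    have h := hLrec (n - 1); rwa [show n - 1 - 1 = n - 2 by ring] at h
  have hx4_16 : (16:ℝ) ≤ (L n)^4 := by nlinarith [sq_nonneg ((L n)^2 - 4), sq_nonneg (L n + 2)]
  have hx4pos : (0:ℝ) < (L n)^4 := by linarith
  have hl4 : (L n)^4 ≤ -L (n - 2) := by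
    rw [hL2, hL1]
    nlinarith [mul_nonneg (sq_nonneg (L n)) (show (0:ℝ) ≤ 25 - 10 * L n by linarith),
      mul_nonneg (show (0:ℝ) ≤ -L n by linarith) (show (0:ℝ) ≤ 5 - L n by linarith)]
  have hS2le : Sl L (n - 2) ≤ 5 / (L n)^4 := by
    have h1 := Sl_le L hLneg hLrec (n - 2)
    have h2 : 5 / (-L (n - 2)) ≤ 5 / (L n)^4 :=
      div_le_div_of_nonneg_left (by norm_num) hx4pos hl4
    linarith
  have ht : 5 / (L n)^4 ≤ 1/2 := by rw [div_le_iff₀ hx4pos]; linarith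
  have htnn : (0:ℝ) ≤ 5 / (L n)^4 := by positivity
  have hQ0 : 0 < Real.exp (Sl L (n - 2)) := Real.exp_pos _
  have hQ1 : 1 ≤ Real.exp (Sl L (n - 2)) := Real.one_le_exp (Sl_nonneg L hLneg _)
  have hQ2 : Real.exp (Sl L (n - 2)) ≤ 1 + 10 / (L n)^4 := by
    calc Real.exp (Sl L (n - 2)) ≤ Real.exp (5 / (L n)^4) := Real.exp_le_exp.2 hS2le
    _ ≤ 1 + 2 * (5 / (L n)^4) := exp_le_one_add_two_mul htnn ht
    _ = 1 + 10 / (L n)^4 := by ring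
  have h2x : (0:ℝ) < 2 - L n := by linarith
  have h2mu : (0:ℝ) < 2 - L n * (5 - L n) := by nlinarith
  have hpos0 : (0:ℝ) < 1 + 4 / (2 - L n) := by positivity
  have hpos1 : (0:ℝ) < 1 + 4 / (2 - L n * (5 - L n)) := by positivity
  have hP : (∏' k : ℕ, (1 + 4 / (2 - L (n - k)))) =
      (1 + 4 / (2 - L n)) * (1 + 4 / (2 - L n * (5 - L n))) * Real.exp (Sl L (n - 2)) := by
    rw [prod_eq_exp L hLneg hLrec n, Sl_split L hLneg hLrec n, Sl_split L hLneg hLrec (n - 1),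
      show n - 1 - 1 = n - 2 by ring, hL1, Real.exp_add, Real.exp_add,
      Real.exp_log hpos0, Real.exp_log hpos1, mul_assoc]
  -- nonzero denominators for the rational identities
  have hnex : L n ≠ 0 := ne_of_lt hx
  have hinvneg : (L n)⁻¹ < 0 := inv_lt_zero.2 hx
  have hne1 : 2 * (L n)⁻¹ - 1 ≠ 0 := by nlinarith
  have hne2 : 2 * (L n)⁻¹^2 - 5 * (L n)⁻¹ + 1 ≠ 0 := by nlinarith [sq_nonneg (L n)⁻¹]
  have hne3 : (2:ℝ) - L n ≠ 0 := ne_of_gt h2x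
  have hne4 : (2:ℝ) - L n * (5 - L n) ≠ 0 := ne_of_gt h2mu
  have hden : (16:ℝ) * ((2*(L n)⁻¹ - 1) * (2*(L n)⁻¹^2 - 5*(L n)⁻¹ + 1))^2 ≠ 0 := by
    exact mul_ne_zero (by norm_num) (pow_ne_zero _ (mul_ne_zero hne1 hne2))
  have hGid : Gf (L n)⁻¹ =
      (1 - L n / 4)^2 -
        ((-(L n) / 4) * ((1 + 4 / (2 - L n)) * (1 + 4 / (2 - L n * (5 - L n)))))^2 := by
    rw [Gf, div_eq_iff hden]
    field_simp
    ring
  have hHid : Hf (L n)⁻¹ =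
      ((-(L n) / 4) * ((1 + 4 / (2 - L n)) * (1 + 4 / (2 - L n * (5 - L n)))))^2 *
        ((1 + 10 / (L n)^4)^2 - 1) := by
    rw [Hf, div_eq_iff hden]
    field_simp
    ring
  have hXnn : (0:ℝ) ≤ ((-(L n) / 4) * ((1 + 4 / (2 - L n)) * (1 + 4 / (2 - L n * (5 - L n)))))^2 :=
    sq_nonneg _
  have h1 : ((-(L n) / 4) * ((1 + 4 / (2 - L n)) * (1 + 4 / (2 - L n * (5 - L n)))))^2 * 1 ≤
      ((-(L n) / 4) * ((1 + 4 / (2 - L n)) * (1 + 4 / (2 - L n * (5 - L n)))))^2 *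
        (Real.exp (Sl L (n - 2)))^2 :=
    mul_le_mul_of_nonneg_left (by nlinarith [hQ0, hQ1]) hXnn
  have h2 : ((-(L n) / 4) * ((1 + 4 / (2 - L n)) * (1 + 4 / (2 - L n * (5 - L n)))))^2 *
        (Real.exp (Sl L (n - 2)))^2 ≤
      ((-(L n) / 4) * ((1 + 4 / (2 - L n)) * (1 + 4 / (2 - L n * (5 - L n)))))^2 *
        (1 + 10 / (L n)^4)^2 :=
    mul_le_mul_of_nonneg_left (by nlinarith [hQ0, hQ1, hQ2]) hXnn
  constructor
  · rw [hP, hGid, hHid]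
    nlinarith [h2]
  · rw [hP, hGid]
    nlinarith [h1]

theorem c_sq_sub_s_sq_tendsto_half (L : ℤ → ℝ) (hLneg : ∀ n, L n < 0)
    (hLrec : ∀ n, L (n - 1) = L n * (5 - L n))
    (hLbot : Filter.Tendsto L Filter.atBot Filter.atBot) :
    Filter.Tendsto
      (fun n : ℤ =>
        (1 - L n / 4) ^ 2 -
          ((-(L n) / 4) * ∏' k : ℕ, (1 + 4 / (2 - L (n - k)))) ^ 2)
      Filter.atBot (nhds (1/2)) := by
  have contG : ContinuousAt Gf 0 := by
    unfold Gf
    exact ContinuousAt.div (by fun_prop) (by fun_prop) (by norm_num)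
  have contH : ContinuousAt Hf 0 := by
    unfold Hf
    exact ContinuousAt.div (by fun_prop) (by fun_prop) (by norm_num)
  have hinv : Filter.Tendsto (fun x : ℝ => x⁻¹) atBot (nhds 0) := by
    have h : Filter.Tendsto (fun x : ℝ => (-x)⁻¹) atBot (nhds 0) :=
      tendsto_inv_atTop_zero.comp tendsto_neg_atBot_atTop
    have h2 : Filter.Tendsto (fun x : ℝ => -(-x)⁻¹) atBot (nhds (-0)) := h.neg
    have he : (fun x : ℝ => -(-x)⁻¹) = fun x : ℝ => x⁻¹ := by funext x; rw [inv_neg, neg_neg]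
    rwa [he, neg_zero] at h2
  have hG : Filter.Tendsto (fun n : ℤ => Gf (L n)⁻¹) atBot (nhds (Gf 0)) := by
    exact (contG.tendsto.comp hinv).comp hLbot
  have hH : Filter.Tendsto (fun n : ℤ => Hf (L n)⁻¹) atBot (nhds (Hf 0)) := by
    exact (contH.tendsto.comp hinv).comp hLbot
  have hG0 : Gf 0 = 1/2 := by norm_num [Gf]
  have hH0 : Hf 0 = 0 := by norm_num [Hf]
  rw [hG0] at hG
  rw [hH0] at hH
  have hlo : Filter.Tendsto (fun n : ℤ => Gf (L n)⁻¹ - Hf (L n)⁻¹) atBot (nhds (1/2)) := by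
    have := hG.sub hH
    simpa using this
  refine tendsto_of_tendsto_of_tendsto_of_le_of_le' hlo hG ?_ ?_
  · exact (hLbot.eventually_le_atBot (-2)).mono fun n hn => (key L hLneg hLrec n hn).1
  · exact (hLbot.eventually_le_atBot (-2)).mono fun n hn => (key L hLneg hLrec n hn).2
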